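/- Let R be an integral domain and M, N be R-modules such that the torsion-free quotients M_tf = M/M_tor and N_tf = N/N_tor are lattices. Then (M ⊗_R N)_tf is a lattice. -/

import Mathlib

open TensorProduct

universe u v

/-- An `R`-module `M` over a domain is a *lattice* if it is torsion-free and embeds into
a finitely generated `R`-module. -/
def IsLattice (R : Type u) (M : Type v) [CommRing R] [AddCommGroup M] [Module R M] : Prop :=
  (∀ (a : R) (m : M), a • m = 0 → a = 0 ∨ m = 0) ∧
  ∃ (P : Type v) (_ : AddCommGroup P) (_ : Module R P) (_ : Module.Finite R P)
    (f : M →ₗ[R] P), Function.Injective f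

section Aux

variable {R : Type u} [CommRing R] [IsDomain R]

open Submodule LinearMap

/-- A linear map sends torsion elements to torsion elements. -/
lemma aux_map_torsion {A B : Type*} [AddCommGroup A] [Module R A] [AddCommGroup B] [Module R B]
    (h : A →ₗ[R] B) {x : A} (hx : x ∈ Submodule.torsion R A) : h x ∈ Submodule.torsion R B := by
  rw [Submodule.mem_torsion_iff] at hx ⊢
  obtain ⟨s, hs⟩ := hx
  refine ⟨s, ?_⟩
  rw [Submonoid.smul_def] at hs ⊢
  rw [← map_smul, hs, map_zero]

set_option maxHeartbeats 1000000 in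
set_option synthInstance.maxHeartbeats 400000 in
/-- The kernel of a tensor product of two injective maps consists of torsion elements. -/
lemma aux_ker_map_torsion {A B C D : Type u}
    [AddCommGroup A] [Module R A] [AddCommGroup B] [Module R B]
    [AddCommGroup C] [Module R C] [AddCommGroup D] [Module R D]
    (f : A →ₗ[R] B) (g : C →ₗ[R] D) (hf : Function.Injective f) (hg : Function.Injective g)
    (x : A ⊗[R] C) (hx : TensorProduct.map f g x = 0) :
    x ∈ Submodule.torsion R (A ⊗[R] C) := by
  classical
  let K := FractionRing R
  haveI : Module.Free K (K ⊗[R] B) := Module.Free.of_divisionRing K _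
  haveI : Module.Free K (K ⊗[R] C) := Module.Free.of_divisionRing K _
  haveI : Module.Flat K (K ⊗[R] B) := Module.Flat.of_free
  haveI : Module.Flat K (K ⊗[R] C) := Module.Flat.of_free
  -- the base changed maps over K
  let F1 := f.baseChange K
  let F2 := g.baseChange K
  have hF1 : Function.Injective F1 := by
    show Function.Injective ⇑(f.baseChange K)
    rw [LinearMap.baseChange_eq_ltensor]
    exact Module.Flat.lTensor_preserves_injective_linearMap f hf
  have hF2 : Function.Injective F2 := by
    show Function.Injective ⇑(g.baseChange K)
    rw [LinearMap.baseChange_eq_ltensor]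
    exact Module.Flat.lTensor_preserves_injective_linearMap g hg
  have hF : Function.Injective (TensorProduct.map F1 F2) := by
    rw [← LinearMap.lTensor_comp_rTensor, LinearMap.coe_comp]
    exact (Module.Flat.lTensor_preserves_injective_linearMap F2 hF2).comp
      (Module.Flat.rTensor_preserves_injective_linearMap F1 hF1)
  let e₁ := TensorProduct.AlgebraTensorModule.distribBaseChange R K A C
  let e₂ := TensorProduct.AlgebraTensorModule.distribBaseChange R K B D
  -- the commuting square, in "symm" form
  have square : ∀ u : (K ⊗[R] A) ⊗[K] (K ⊗[R] C),
      (TensorProduct.map f g).baseChange K (e₁.symm u)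
        = e₂.symm (TensorProduct.map F1 F2 u) := by
    intro u
    induction u using TensorProduct.induction_on with
    | zero => simp
    | add u v hu hv => simp [map_add, hu, hv]
    | tmul v w =>
      induction v using TensorProduct.induction_on with
      | zero => simp
      | add v₁ v₂ h₁ h₂ => rw [add_tmul, map_add, map_add, h₁, h₂, map_add, map_add]
      | tmul k a =>
        induction w using TensorProduct.induction_on with
        | zero => simp
        | add w₁ w₂ h₁ h₂ => rw [tmul_add, map_add, map_add, h₁, h₂, map_add, map_add]
        | tmul l c =>
          simp [e₁, e₂, F1, F2, TensorProduct.AlgebraTensorModule.distribBaseChange,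
            smul_tmul', smul_tmul]
  have key : (1 : K) ⊗ₜ[R] x = 0 := by
    have h0 : (TensorProduct.map f g).baseChange K ((1 : K) ⊗ₜ[R] x) = 0 := by
      simp [hx]
    have := square (e₁ ((1 : K) ⊗ₜ[R] x))
    rw [e₁.symm_apply_apply] at this
    rw [this] at h0
    have h1 : TensorProduct.map F1 F2 (e₁ ((1 : K) ⊗ₜ[R] x)) = 0 := by
      have := e₂.symm.map_eq_zero_iff.mp h0
      exact this
    have h2 : e₁ ((1 : K) ⊗ₜ[R] x) = 0 := hF (by simpa using h1)
    have := e₁.map_eq_zero_iff.mp h2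
    exact this
  -- conclude torsion via localized modules
  haveI : IsLocalizedModule (nonZeroDivisors R) (TensorProduct.mk R K (A ⊗[R] C) 1) :=
    (isLocalizedModule_iff_isBaseChange (nonZeroDivisors R) K _).mpr
      (TensorProduct.isBaseChange R (A ⊗[R] C) K)
  obtain ⟨s, hs⟩ :=
    (IsLocalizedModule.eq_zero_iff (nonZeroDivisors R)
      (TensorProduct.mk R K (A ⊗[R] C) 1)).mp key
  exact (Submodule.mem_torsion_iff _).mpr ⟨s, hs⟩

end Aux

theorem stmt4 (R : Type u) (M N : Type u) [CommRing R] [IsDomain R]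
    [AddCommGroup M] [Module R M] [AddCommGroup N] [Module R N]
    (hM : IsLattice R (M ⧸ Submodule.torsion R M))
    (hN : IsLattice R (N ⧸ Submodule.torsion R N)) :
    IsLattice R ((M ⊗[R] N) ⧸ Submodule.torsion R (M ⊗[R] N)) := by
  classical
  obtain ⟨-, P, _, _, _, f, hf⟩ := hM
  obtain ⟨-, Q, _, _, _, g, hg⟩ := hN
  set qM := (Submodule.torsion R M).mkQ with hqM
  set qN := (Submodule.torsion R N).mkQ with hqN
  set T := Submodule.torsion R (P ⊗[R] Q) with hT
  let ψ : M ⊗[R] N →ₗ[R] (P ⊗[R] Q) ⧸ T :=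
    T.mkQ ∘ₗ (TensorProduct.map f g) ∘ₗ (TensorProduct.map qM qN)
  -- the kernel of `map qM qN` consists of torsion elements
  have hker1 : ∀ x : M ⊗[R] N, TensorProduct.map qM qN x = 0 →
      x ∈ Submodule.torsion R (M ⊗[R] N) := by
    intro x hx
    have hker := TensorProduct.map_ker
      (LinearMap.exact_subtype_mkQ (Submodule.torsion R M))
      (Submodule.mkQ_surjective _)
      (LinearMap.exact_subtype_mkQ (Submodule.torsion R N))
      (Submodule.mkQ_surjective _)
    have hx' : x ∈ LinearMap.ker (TensorProduct.map qM qN) := hx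
    rw [hker] at hx'
    have hr1 : LinearMap.range (LinearMap.lTensor M (Submodule.torsion R N).subtype) ≤
        Submodule.torsion R (M ⊗[R] N) := by
      rintro _ ⟨z, rfl⟩
      induction z using TensorProduct.induction_on with
      | zero => simp
      | add z₁ z₂ h₁ h₂ => rw [map_add]; exact Submodule.add_mem _ h₁ h₂
      | tmul m t =>
        obtain ⟨s, hs⟩ := t.2
        refine ⟨s, ?_⟩
        have hs' : (s : R) • (t : N) = 0 := hs
        rw [Submonoid.smul_def, LinearMap.lTensor_tmul, Submodule.coe_subtype,
          smul_tmul', smul_tmul, hs', tmul_zero]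
    have hr2 : LinearMap.range (LinearMap.rTensor N (Submodule.torsion R M).subtype) ≤
        Submodule.torsion R (M ⊗[R] N) := by
      rintro _ ⟨z, rfl⟩
      induction z using TensorProduct.induction_on with
      | zero => simp
      | add z₁ z₂ h₁ h₂ => rw [map_add]; exact Submodule.add_mem _ h₁ h₂
      | tmul t n =>
        obtain ⟨s, hs⟩ := t.2
        refine ⟨s, ?_⟩
        have hs' : (s : R) • (t : M) = 0 := hs
        rw [Submonoid.smul_def, LinearMap.rTensor_tmul, Submodule.coe_subtype,
          smul_tmul', hs', zero_tmul]
    exact (sup_le hr1 hr2) hx'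
  -- the kernel of `ψ` consists of torsion elements
  have hker : ∀ x : M ⊗[R] N, ψ x = 0 → x ∈ Submodule.torsion R (M ⊗[R] N) := by
    intro x hx
    have h2 : TensorProduct.map f g (TensorProduct.map qM qN x) ∈ T := by
      have : T.mkQ (TensorProduct.map f g (TensorProduct.map qM qN x)) = 0 := hx
      rwa [← LinearMap.mem_ker, Submodule.ker_mkQ] at this
    rw [Submodule.mem_torsion_iff] at h2
    obtain ⟨s, hs⟩ := h2
    have h3 : TensorProduct.map f g ((s : R) • TensorProduct.map qM qN x) = 0 := by
      rw [map_smul, ← Submonoid.smul_def, hs]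
    have h4 : (s : R) • TensorProduct.map qM qN x ∈
        Submodule.torsion R ((M ⧸ Submodule.torsion R M) ⊗[R] (N ⧸ Submodule.torsion R N)) :=
      aux_ker_map_torsion f g hf hg _ h3
    rw [Submodule.mem_torsion_iff] at h4
    obtain ⟨t, ht⟩ := h4
    have h5 : TensorProduct.map qM qN (((t : R) * (s : R)) • x) = 0 := by
      rw [map_smul, mul_smul]
      rw [Submonoid.smul_def] at ht
      rw [← map_smul] at ht ⊢
      exact ht
    have h6 := hker1 _ h5
    rw [Submodule.mem_torsion_iff] at h6 ⊢
    obtain ⟨u, hu⟩ := h6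
    refine ⟨u * (t * s), ?_⟩
    rw [Submonoid.smul_def] at hu ⊢
    push_cast
    rw [mul_smul] at hu ⊢
    convert hu using 2
    push_cast
    rw [mul_smul]
  -- torsion elements are in the kernel of `ψ`
  have hle : Submodule.torsion R (M ⊗[R] N) ≤ LinearMap.ker ψ := by
    intro x hx
    have h1 : TensorProduct.map f g (TensorProduct.map qM qN x) ∈ T :=
      aux_map_torsion _ (aux_map_torsion _ hx)
    show T.mkQ (TensorProduct.map f g (TensorProduct.map qM qN x)) = 0
    rwa [← LinearMap.mem_ker, Submodule.ker_mkQ]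
  constructor
  · exact fun a m h => smul_eq_zero.mp h
  · refine ⟨(P ⊗[R] Q) ⧸ T, inferInstance, inferInstance, inferInstance,
      (Submodule.torsion R (M ⊗[R] N)).liftQ ψ hle, ?_⟩
    rw [← LinearMap.ker_eq_bot]
    apply Submodule.ker_liftQ_eq_bot
    intro x hx
    exact hker x hx
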